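/- Let E be a real Banach space and let (E_λ)_{λ∈Λ} be a family of closed subspaces of E that is directed by inclusion and whose union is dense in E, such that for each λ there exists a linear projection P_λ : E → E_λ with ‖P_λ‖ ≤ 1. For a Banach space G and a free Banach f-algebra (A_G, η_G) over G, define τ_G(f) for f ∈ A_G as the supremum of ‖T̂(f)‖ over all finite-dimensional semiprime Banach f-algebras B, all linear operators T : G → B with ‖T‖ ≤ 1, and T̂ : A_G → B the unique lattice-algebra homomorphic extension with T̂ ∘ η_G = T. Suppose that for every λ and every free Banach f-algebra (A_λ, η_λ) over E_λ one has τ_{E_λ}(f) = ‖f‖ for all f ∈ A_λ. Then for every free Banach f-algebra (A, η) over E one has τ_E(f) = ‖f‖ for all f ∈ A. -/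

import Mathlib

/-- A normed lattice ordered group (removed from Mathlib; old definition restored). -/
class NormedLatticeAddCommGroup (α : Type*) extends NormedAddCommGroup α, Lattice α, HasSolidNorm α where
  add_le_add_left : ∀ a b : α, a ≤ b → ∀ c : α, c + a ≤ c + b

/-- A bundled Banach f-algebra. -/
structure BanachFAlg : Type 1 where
  carrier : Type
  [grp : NormedLatticeAddCommGroup carrier]
  [mod : NormedSpace ℝ carrier]
  [compl : CompleteSpace carrier]
  mul : carrier → carrier → carrier
  mul_assoc' : ∀ a b c, mul (mul a b) c = mul a (mul b c)
  add_mul' : ∀ a b c, mul (a + b) c = mul a c + mul b c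
  mul_add' : ∀ a b c, mul a (b + c) = mul a b + mul a c
  smul_mul' : ∀ (r : ℝ) (a b), mul (r • a) b = r • mul a b
  mul_smul' : ∀ (r : ℝ) (a b), mul a (r • b) = r • mul a b
  mul_nonneg' : ∀ a b, 0 ≤ a → 0 ≤ b → 0 ≤ mul a b
  inf_mul_left' : ∀ a b c, a ⊓ b = 0 → 0 ≤ c → mul c a ⊓ b = 0
  inf_mul_right' : ∀ a b c, a ⊓ b = 0 → 0 ≤ c → mul a c ⊓ b = 0
  norm_mul_le' : ∀ a b, ‖mul a b‖ ≤ ‖a‖ * ‖b‖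

attribute [instance] BanachFAlg.grp BanachFAlg.mod BanachFAlg.compl

/-- Lattice-algebra homomorphism between bundled Banach f-algebras. -/
def IsLatAlgHom (A B : BanachFAlg) (T : A.carrier →L[ℝ] B.carrier) : Prop :=
  (∀ a b, T (A.mul a b) = B.mul (T a) (T b)) ∧ (∀ a b, T (a ⊔ b) = T a ⊔ T b)

/-- `(A, η)` is a free Banach f-algebra over `E`. -/
def IsFreeBanachFAlg (E : Type) [NormedAddCommGroup E] [NormedSpace ℝ E]
    (A : BanachFAlg) (η : E →ₗᵢ[ℝ] A.carrier) : Prop :=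
  ∀ (B : BanachFAlg) (T : E →L[ℝ] B.carrier), ‖T‖ ≤ 1 →
    ∃! That : A.carrier →L[ℝ] B.carrier,
      IsLatAlgHom A B That ∧ (∀ x, That (η x) = T x) ∧ ‖That‖ = ‖T‖

/-- The quantity `τ(f)`: the supremum of `‖T̂ f‖` over all contractive operators
`T` from `G` into finite-dimensional semiprime Banach f-algebras, where `T̂` is the
unique lattice-algebra homomorphic extension of `T` given by the universal
property. -/
noncomputable def tau (G : Type) [NormedAddCommGroup G] [NormedSpace ℝ G]
    (A : BanachFAlg) (η : G →ₗᵢ[ℝ] A.carrier) (f : A.carrier) : ℝ :=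
  sSup {r : ℝ |
    ∃ B : BanachFAlg, FiniteDimensional ℝ B.carrier ∧
      (∀ b : B.carrier, B.mul b b = 0 → b = 0) ∧
      ∃ (T : G →L[ℝ] B.carrier) (That : A.carrier →L[ℝ] B.carrier),
        ‖T‖ ≤ 1 ∧ IsLatAlgHom A B That ∧ (∀ x, That (η x) = T x) ∧
        ‖That‖ = ‖T‖ ∧ r = ‖That f‖}

instance NormedLatticeAddCommGroup.toIsOrderedAddMonoid (α : Type*) [NormedLatticeAddCommGroup α] :
    IsOrderedAddMonoid α :=
  ⟨fun a b h c => by simpa [add_comm] using NormedLatticeAddCommGroup.add_le_add_left a b h c,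
    fun a b h c => NormedLatticeAddCommGroup.add_le_add_left a b h c⟩

noncomputable instance : NormedLatticeAddCommGroup ℝ :=
  { Real.normedAddCommGroup, Real.lattice, (inferInstance : HasSolidNorm ℝ) with
    add_le_add_left := fun a b h c => add_le_add_right h c }

namespace BanachFAlg
variable (A : BanachFAlg)

noncomputable def mulCLM : A.carrier →L[ℝ] A.carrier →L[ℝ] A.carrier :=
  LinearMap.mkContinuous₂
    (LinearMap.mk₂ ℝ A.mul A.add_mul' A.smul_mul' A.mul_add' A.mul_smul') 1
    (by intro a b; simpa using A.norm_mul_le' a b)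

@[simp] lemma mulCLM_apply (a b : A.carrier) : A.mulCLM a b = A.mul a b := rfl

lemma mul_continuous : Continuous (fun p : A.carrier × A.carrier => A.mul p.1 p.2) := by
  have : Continuous (fun p : A.carrier × A.carrier => A.mulCLM p.1 p.2) :=
    A.mulCLM.continuous₂
  simpa using this

lemma zero_mul (b : A.carrier) : A.mul 0 b = 0 := by
  have h := A.add_mul' 0 0 b
  rw [add_zero] at h
  exact right_eq_add.mp h

lemma mul_zero (b : A.carrier) : A.mul b 0 = 0 := by
  have h := A.mul_add' b 0 0
  rw [add_zero] at h
  exact right_eq_add.mp h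

end BanachFAlg

lemma isLatAlgHom_zero (A B : BanachFAlg) : IsLatAlgHom A B 0 := by
  constructor
  · intro a b
    simp [BanachFAlg.zero_mul]
  · intro a b
    simp

lemma isLatAlgHom_comp {A B C : BanachFAlg} {S : A.carrier →L[ℝ] B.carrier}
    {T : B.carrier →L[ℝ] C.carrier} (hS : IsLatAlgHom A B S) (hT : IsLatAlgHom B C T) :
    IsLatAlgHom A C (T.comp S) := by
  refine ⟨fun a b => ?_, fun a b => ?_⟩
  · simp [ContinuousLinearMap.comp_apply, hS.1, hT.1]
  · simp [ContinuousLinearMap.comp_apply, hS.2, hT.2]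

/-- A closed sub-lattice-subalgebra. -/
structure IsFSub (A : BanachFAlg) (p : Submodule ℝ A.carrier) : Prop where
  closed : IsClosed (p : Set A.carrier)
  mul_mem : ∀ ⦃a b⦄, a ∈ p → b ∈ p → A.mul a b ∈ p
  sup_mem : ∀ ⦃a b⦄, a ∈ p → b ∈ p → a ⊔ b ∈ p

namespace IsFSub
variable {A : BanachFAlg} {p : Submodule ℝ A.carrier}

lemma inf_mem (h : IsFSub A p) ⦃a b⦄ (ha : a ∈ p) (hb : b ∈ p) : a ⊓ b ∈ p := by
  have e : a ⊓ b = a + b - (a ⊔ b) := eq_sub_of_add_eq (inf_add_sup a b)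
  rw [e]; exact sub_mem (add_mem ha hb) (h.sup_mem ha hb)

@[reducible] noncomputable def subLat (h : IsFSub A p) : Lattice ↥p :=
  Subtype.lattice h.sup_mem h.inf_mem

@[reducible] noncomputable def subGrp (h : IsFSub A p) : NormedLatticeAddCommGroup ↥p :=
  letI lat : Lattice ↥p := h.subLat
  { (inferInstance : NormedAddCommGroup ↥p), lat with
    solid := by
      intro x y hxy
      have h2 : |(x : A.carrier)| ≤ |(y : A.carrier)| := hxy
      show ‖(x : A.carrier)‖ ≤ ‖(y : A.carrier)‖
      exact HasSolidNorm.solid h2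
    add_le_add_left := by
      intro a b hab c
      have : (c : A.carrier) + a ≤ (c : A.carrier) + b := add_le_add_right (show (a : A.carrier) ≤ b from hab) _
      exact this }

@[reducible] noncomputable def toFAlg (h : IsFSub A p) : BanachFAlg :=
  letI grp : NormedLatticeAddCommGroup ↥p := h.subGrp
  letI : CompleteSpace ↥p := IsClosed.completeSpace_coe (hs := h.closed)
  { carrier := ↥p
    grp := grp
    mul := fun a b => ⟨A.mul a b, h.mul_mem a.2 b.2⟩
    mul_assoc' := fun a b c => Subtype.ext (A.mul_assoc' a b c)
    add_mul' := fun a b c => Subtype.ext (A.add_mul' a b c)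
    mul_add' := fun a b c => Subtype.ext (A.mul_add' a b c)
    smul_mul' := fun r a b => Subtype.ext (A.smul_mul' r a b)
    mul_smul' := fun r a b => Subtype.ext (A.mul_smul' r a b)
    mul_nonneg' := by
      intro a b ha hb
      have := A.mul_nonneg' a b ha hb
      exact this
    inf_mul_left' := by
      intro a b c hab hc
      exact Subtype.ext (A.inf_mul_left' a b c (congrArg Subtype.val hab) hc)
    inf_mul_right' := by
      intro a b c hab hc
      exact Subtype.ext (A.inf_mul_right' a b c (congrArg Subtype.val hab) hc)
    norm_mul_le' := fun a b => A.norm_mul_le' a b }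

/-- inclusion of the subalgebra -/
noncomputable def incl (h : IsFSub A p) : h.toFAlg.carrier →L[ℝ] A.carrier := p.subtypeL

@[simp] lemma incl_apply (h : IsFSub A p) (a : h.toFAlg.carrier) :
    h.incl a = a.1 := rfl

@[simp] lemma norm_incl (h : IsFSub A p) (a : h.toFAlg.carrier) : ‖h.incl a‖ = ‖a‖ := rfl

lemma incl_latAlgHom (h : IsFSub A p) : IsLatAlgHom h.toFAlg A h.incl :=
  ⟨fun _ _ => rfl, fun _ _ => rfl⟩

lemma isometry_incl (h : IsFSub A p) : Isometry (h.incl : h.toFAlg.carrier → A.carrier) :=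
  AddMonoidHomClass.isometry_of_norm _ (fun a => rfl)

end IsFSub

/-- Generated closed sub-lattice-subalgebra. -/
def genSub (A : BanachFAlg) (S : Set A.carrier) : Submodule ℝ A.carrier :=
  sInf {p | IsFSub A p ∧ S ⊆ p}

lemma isFSub_genSub (A : BanachFAlg) (S : Set A.carrier) : IsFSub A (genSub A S) := by
  constructor
  · have : (genSub A S : Set A.carrier) = ⋂ p ∈ {p | IsFSub A p ∧ S ⊆ p}, ↑p :=
      Submodule.coe_sInf _
    rw [this]
    exact isClosed_biInter fun p hp => hp.1.closed
  · intro a b ha hb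
    rw [genSub, Submodule.mem_sInf] at *
    exact fun q hq => hq.1.mul_mem (ha q hq) (hb q hq)
  · intro a b ha hb
    rw [genSub, Submodule.mem_sInf] at *
    exact fun q hq => hq.1.sup_mem (ha q hq) (hb q hq)

lemma subset_genSub (A : BanachFAlg) (S : Set A.carrier) : S ⊆ ↑(genSub A S) := by
  intro x hx
  rw [SetLike.mem_coe, genSub, Submodule.mem_sInf]
  exact fun q hq => hq.2 hx

lemma genSub_le (A : BanachFAlg) {S : Set A.carrier} {q : Submodule ℝ A.carrier}
    (hq : IsFSub A q) (hSq : S ⊆ q) : genSub A S ≤ q :=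
  sInf_le ⟨hq, hSq⟩

/-- ℝ as a Banach f-algebra. -/
noncomputable def RealFAlg : BanachFAlg where
  carrier := ℝ
  mul := (· * ·)
  mul_assoc' := mul_assoc
  add_mul' := add_mul
  mul_add' := mul_add
  smul_mul' := fun r a b => by simp [smul_eq_mul]; ring
  mul_smul' := fun r a b => by simp [smul_eq_mul]; ring
  mul_nonneg' := fun a b ha hb => mul_nonneg ha hb
  inf_mul_left' := by
    intro a b c h hc
    have ha : (0:ℝ) ≤ a := h ▸ inf_le_left
    have hb : (0:ℝ) ≤ b := h ▸ inf_le_right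
    rcases min_eq_iff.mp (by simpa using h) with ⟨h0, _⟩ | ⟨h0, _⟩
    · subst h0; simp [min_eq_left hb]
    · subst h0; simp [min_eq_right (mul_nonneg hc ha)]
  inf_mul_right' := by
    intro a b c h hc
    have ha : (0:ℝ) ≤ a := h ▸ inf_le_left
    have hb : (0:ℝ) ≤ b := h ▸ inf_le_right
    rcases min_eq_iff.mp (by simpa using h) with ⟨h0, _⟩ | ⟨h0, _⟩
    · subst h0; simp [min_eq_left hb]
    · subst h0; simp [min_eq_right (mul_nonneg ha hc)]
  norm_mul_le' := fun a b => le_of_eq (norm_mul a b)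


lemma mem_closure_op {α : Type*} [TopologicalSpace α] {g : α → α → α}
    (hg : Continuous fun p : α × α => g p.1 p.2) {s : Set α}
    (hs : ∀ a ∈ s, ∀ b ∈ s, g a b ∈ s) {x y : α}
    (hx : x ∈ closure s) (hy : y ∈ closure s) : g x y ∈ closure s := by
  have hmap : Set.MapsTo (fun p : α × α => g p.1 p.2) (s ×ˢ s) s := by
    rintro ⟨a, b⟩ ⟨ha, hb⟩; exact hs a ha b hb
  have h2 := hmap.closure hg
  have hxy : (x, y) ∈ closure (s ×ˢ s) := by rw [closure_prod_eq]; exact ⟨hx, hy⟩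
  exact h2 hxy

def tauSet (G : Type) [NormedAddCommGroup G] [NormedSpace ℝ G]
    (A : BanachFAlg) (η : G →ₗᵢ[ℝ] A.carrier) (f : A.carrier) : Set ℝ :=
  {r : ℝ |
    ∃ B : BanachFAlg, FiniteDimensional ℝ B.carrier ∧
      (∀ b : B.carrier, B.mul b b = 0 → b = 0) ∧
      ∃ (T : G →L[ℝ] B.carrier) (That : A.carrier →L[ℝ] B.carrier),
        ‖T‖ ≤ 1 ∧ IsLatAlgHom A B That ∧ (∀ x, That (η x) = T x) ∧
        ‖That‖ = ‖T‖ ∧ r = ‖That f‖}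

lemma tau_eq (G : Type) [NormedAddCommGroup G] [NormedSpace ℝ G]
    (A : BanachFAlg) (η : G →ₗᵢ[ℝ] A.carrier) (f : A.carrier) :
    tau G A η f = sSup (tauSet G A η f) := rfl

lemma zero_mem_tauSet (G : Type) [NormedAddCommGroup G] [NormedSpace ℝ G]
    (A : BanachFAlg) (η : G →ₗᵢ[ℝ] A.carrier) (f : A.carrier) :
    (0 : ℝ) ∈ tauSet G A η f := by
  refine ⟨RealFAlg, inferInstanceAs (FiniteDimensional ℝ ℝ), ?_, 0, 0, ?_,
    isLatAlgHom_zero A RealFAlg, ?_, ?_, ?_⟩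
  · intro b hb
    have hb' : (show ℝ from b) * (show ℝ from b) = 0 := hb
    exact mul_self_eq_zero.mp hb'
  · simp
  · simp
  · simp
  · simp

lemma tauSet_le_norm (G : Type) [NormedAddCommGroup G] [NormedSpace ℝ G]
    (A : BanachFAlg) (η : G →ₗᵢ[ℝ] A.carrier) (f : A.carrier) :
    ∀ r ∈ tauSet G A η f, r ≤ ‖f‖ := by
  rintro r ⟨B, -, -, T, That, hT, -, -, hnorm, rfl⟩
  calc ‖That f‖ ≤ ‖That‖ * ‖f‖ := That.le_opNorm f
    _ = ‖T‖ * ‖f‖ := by rw [hnorm]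
    _ ≤ 1 * ‖f‖ := mul_le_mul_of_nonneg_right hT (norm_nonneg f)
    _ = ‖f‖ := one_mul _

/-- Two lattice-algebra homomorphisms on the generated subalgebra agreeing on the
generators are equal. -/
lemma latAlgHom_ext {A : BanachFAlg} (S : Set A.carrier) (B : BanachFAlg)
    (T₁ T₂ : (isFSub_genSub A S).toFAlg.carrier →L[ℝ] B.carrier)
    (h₁ : IsLatAlgHom (isFSub_genSub A S).toFAlg B T₁)
    (h₂ : IsLatAlgHom (isFSub_genSub A S).toFAlg B T₂)
    (hS : ∀ (x : A.carrier) (hx : x ∈ genSub A S), x ∈ S → T₁ ⟨x, hx⟩ = T₂ ⟨x, hx⟩) :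
    T₁ = T₂ := by
  letI : CompleteSpace ↥(genSub A S) := IsClosed.completeSpace_coe (hs := (isFSub_genSub A S).closed)
  have hiso : Isometry ((↑) : ↥(genSub A S) → A.carrier) := (genSub A S).subtypeₗᵢ.isometry
  have hC : IsClosed {a : (isFSub_genSub A S).toFAlg.carrier | T₁ a = T₂ a} :=
    isClosed_eq T₁.continuous T₂.continuous
  let q : Submodule ℝ A.carrier :=
    { carrier := {x | ∃ hx : x ∈ genSub A S, T₁ ⟨x, hx⟩ = T₂ ⟨x, hx⟩}
      zero_mem' := ⟨zero_mem _, by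
        have e : (⟨0, zero_mem _⟩ : (isFSub_genSub A S).toFAlg.carrier) = 0 := rfl
        rw [e, map_zero, map_zero]⟩
      add_mem' := by
        rintro a b ⟨ha, ea⟩ ⟨hb, eb⟩
        refine ⟨add_mem ha hb, ?_⟩
        have e : (⟨a + b, add_mem ha hb⟩ : (isFSub_genSub A S).toFAlg.carrier)
            = ⟨a, ha⟩ + ⟨b, hb⟩ := rfl
        rw [e, map_add, map_add, ea, eb]
      smul_mem' := by
        rintro r a ⟨ha, ea⟩
        refine ⟨Submodule.smul_mem _ r ha, ?_⟩
        have e : (⟨r • a, Submodule.smul_mem _ r ha⟩ : (isFSub_genSub A S).toFAlg.carrier)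
            = r • (⟨a, ha⟩ : (isFSub_genSub A S).toFAlg.carrier) := rfl
        rw [e, map_smul, map_smul, ea] }
  have hq : IsFSub A q := by
    constructor
    · have e : (q : Set A.carrier)
          = Subtype.val '' {a : (isFSub_genSub A S).toFAlg.carrier | T₁ a = T₂ a} := by
        ext x
        constructor
        · rintro ⟨hx, e⟩
          exact ⟨⟨x, hx⟩, e, rfl⟩
        · rintro ⟨⟨y, hy⟩, e, rfl⟩
          exact ⟨hy, e⟩
      rw [e]
      exact hiso.isClosedEmbedding.isClosedMap _ hC
    · rintro a b ⟨ha, ea⟩ ⟨hb, eb⟩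
      refine ⟨(isFSub_genSub A S).mul_mem ha hb, ?_⟩
      have e : (⟨A.mul a b, (isFSub_genSub A S).mul_mem ha hb⟩ :
            (isFSub_genSub A S).toFAlg.carrier)
          = (isFSub_genSub A S).toFAlg.mul ⟨a, ha⟩ ⟨b, hb⟩ := rfl
      rw [e, h₁.1, h₂.1, ea, eb]
    · rintro a b ⟨ha, ea⟩ ⟨hb, eb⟩
      refine ⟨(isFSub_genSub A S).sup_mem ha hb, ?_⟩
      have e1 : T₁ ⟨a ⊔ b, (isFSub_genSub A S).sup_mem ha hb⟩ = T₁ ⟨a, ha⟩ ⊔ T₁ ⟨b, hb⟩ :=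
        h₁.2 ⟨a, ha⟩ ⟨b, hb⟩
      have e2 : T₂ ⟨a ⊔ b, (isFSub_genSub A S).sup_mem ha hb⟩ = T₂ ⟨a, ha⟩ ⊔ T₂ ⟨b, hb⟩ :=
        h₂.2 ⟨a, ha⟩ ⟨b, hb⟩
      rw [e1, e2, ea, eb]
  have hle : genSub A S ≤ q := genSub_le A hq (fun x hx => ⟨subset_genSub A S hx, hS x _ hx⟩)
  ext a
  obtain ⟨x, hx⟩ := a
  obtain ⟨hx', e⟩ := hle hx
  exact e

/-- Corestriction of `η` to the subalgebra generated by `η '' F`. -/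
noncomputable def subeta {E : Type} [NormedAddCommGroup E] [NormedSpace ℝ E]
    {A : BanachFAlg} (η : E →ₗᵢ[ℝ] A.carrier) (F : Submodule ℝ E) :
    ↥F →ₗᵢ[ℝ] (isFSub_genSub A (⇑η '' (F : Set E))).toFAlg.carrier where
  toLinearMap :=
    { toFun := fun y => ⟨η y, subset_genSub _ _ ⟨y, y.2, rfl⟩⟩
      map_add' := by
        intro a b
        apply Subtype.ext
        show η ((a : E) + b) = η a + η b
        rw [map_add]
      map_smul' := by
        intro r a
        apply Subtype.ext
        show η (r • (a : E)) = r • η a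
        rw [map_smul] }
  norm_map' := fun y => η.norm_map y

lemma free_sub {E : Type} [NormedAddCommGroup E] [NormedSpace ℝ E]
    {A : BanachFAlg} {η : E →ₗᵢ[ℝ] A.carrier} (hfree : IsFreeBanachFAlg E A η)
    (F : Submodule ℝ E) (P : E →L[ℝ] ↥F) (hP : ‖P‖ ≤ 1) (hPy : ∀ y : ↥F, P (y : E) = y) :
    IsFreeBanachFAlg ↥F (isFSub_genSub A (⇑η '' (F : Set E))).toFAlg (subeta η F) := by
  intro B T hT
  set h := isFSub_genSub A (⇑η '' (F : Set E)) with hh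
  have hTP : ‖T.comp P‖ ≤ 1 :=
    le_trans (T.opNorm_comp_le P) (mul_le_one₀ hT (norm_nonneg P) hP)
  obtain ⟨hat, ⟨hhom, hext, hnorm⟩, -⟩ := hfree B (T.comp P) hTP
  have hext2 : ∀ y : ↥F, (hat.comp h.incl) (subeta η F y) = T y := by
    intro y
    show hat (η y) = T y
    rw [hext y]
    show T (P (y : E)) = T y
    rw [hPy]
  have hle1 : ‖hat.comp h.incl‖ ≤ ‖T‖ := by
    refine ContinuousLinearMap.opNorm_le_bound _ (norm_nonneg T) (fun a => ?_)
    calc ‖hat (h.incl a)‖ ≤ ‖hat‖ * ‖h.incl a‖ := hat.le_opNorm _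
      _ = ‖T.comp P‖ * ‖a‖ := by rw [hnorm, h.norm_incl]
      _ ≤ (‖T‖ * ‖P‖) * ‖a‖ := mul_le_mul_of_nonneg_right (T.opNorm_comp_le P) (norm_nonneg a)
      _ ≤ ‖T‖ * ‖a‖ :=
        mul_le_mul_of_nonneg_right (mul_le_of_le_one_right (norm_nonneg T) hP) (norm_nonneg a)
  have hle2 : ‖T‖ ≤ ‖hat.comp h.incl‖ := by
    refine ContinuousLinearMap.opNorm_le_bound _ (norm_nonneg (hat.comp h.incl)) (fun y => ?_)
    rw [← hext2 y]
    calc ‖(hat.comp h.incl) (subeta η F y)‖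
        ≤ ‖hat.comp h.incl‖ * ‖subeta η F y‖ := (hat.comp h.incl).le_opNorm _
      _ = ‖hat.comp h.incl‖ * ‖y‖ := by rw [(subeta η F).norm_map]
  refine ⟨hat.comp h.incl,
    ⟨isLatAlgHom_comp h.incl_latAlgHom hhom, hext2, le_antisymm hle1 hle2⟩, ?_⟩
  rintro That' ⟨hhom', hext', -⟩
  refine latAlgHom_ext _ B That' (hat.comp h.incl) hhom'
    (isLatAlgHom_comp h.incl_latAlgHom hhom) ?_
  rintro x hx ⟨y, hy, rfl⟩
  have e1 : (⟨η y, hx⟩ : h.toFAlg.carrier) = subeta η F ⟨y, hy⟩ := rfl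
  rw [e1, hext' ⟨y, hy⟩, hext2 ⟨y, hy⟩]

set_option maxHeartbeats 2000000 in
set_option synthInstance.maxHeartbeats 400000 in
theorem stmt19 (E : Type) [NormedAddCommGroup E] [NormedSpace ℝ E] [CompleteSpace E]
    (Λ : Type) [Nonempty Λ] (Esub : Λ → Submodule ℝ E)
    (hclosed : ∀ l, IsClosed ((Esub l : Set E)))
    (hdir : ∀ l m, ∃ k, Esub l ≤ Esub k ∧ Esub m ≤ Esub k)
    (hdense : Dense (⋃ l, (Esub l : Set E)))
    (hproj : ∀ l, ∃ P : E →L[ℝ] ↥(Esub l), ‖P‖ ≤ 1 ∧ ∀ y : ↥(Esub l), P (y : E) = y)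
    (hsub : ∀ (l : Λ) (Al : BanachFAlg) (ηl : ↥(Esub l) →ₗᵢ[ℝ] Al.carrier),
      IsFreeBanachFAlg ↥(Esub l) Al ηl → ∀ f : Al.carrier, tau ↥(Esub l) Al ηl f = ‖f‖) :
    ∀ (A : BanachFAlg) (η : E →ₗᵢ[ℝ] A.carrier),
      IsFreeBanachFAlg E A η → ∀ f : A.carrier, tau E A η f = ‖f‖ := by
  intro A η hfree f
  by_cases hE : ∀ x : E, x = 0
  · -- degenerate case: E = 0 makes hsub contradictory
    exfalso
    obtain ⟨l⟩ := (inferInstance : Nonempty Λ)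
    have hx0 : ∀ x : ↥(Esub l), x = 0 := fun x => Subtype.ext (hE x)
    let ηl : ↥(Esub l) →ₗᵢ[ℝ] RealFAlg.carrier :=
      { toLinearMap := 0
        norm_map' := fun x => by rw [hx0 x]; simp }
    have hTz : ∀ (B : BanachFAlg) (T : ↥(Esub l) →L[ℝ] B.carrier), ‖T‖ = 0 := by
      intro B T
      have hT0 : T = 0 := ContinuousLinearMap.ext fun x => by rw [hx0 x]; simp
      rw [hT0]
      exact ContinuousLinearMap.opNorm_zero
    have hfl : IsFreeBanachFAlg ↥(Esub l) RealFAlg ηl := by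
      intro B T hT
      have hT0 : T = 0 := ContinuousLinearMap.ext fun x => by rw [hx0 x]; simp
      refine ⟨0, ⟨isLatAlgHom_zero _ _, fun x => by simp [hT0], by rw [hT0, ContinuousLinearMap.opNorm_zero, ContinuousLinearMap.opNorm_zero]⟩, ?_⟩
      rintro That' ⟨-, -, hn⟩
      rw [hTz B T] at hn
      refine ContinuousLinearMap.ext fun a => ?_
      have h5 := That'.le_opNorm a
      rw [hn, zero_mul] at h5
      simpa using norm_le_zero_iff.mp h5
    have h1 := hsub l RealFAlg ηl hfl (show RealFAlg.carrier from (1 : ℝ))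
    have h2 : tau ↥(Esub l) RealFAlg ηl (show RealFAlg.carrier from (1 : ℝ)) ≤ 0 := by
      rw [tau_eq]
      refine csSup_le ⟨0, zero_mem_tauSet _ _ _ _⟩ ?_
      rintro r ⟨B, -, -, T, That, -, -, -, hnorm, rfl⟩
      have h4 : ‖That‖ = 0 := by rw [hnorm, hTz B T]
      have h5 := That.le_opNorm (show RealFAlg.carrier from (1 : ℝ))
      rw [h4, zero_mul] at h5
      exact h5
    rw [h1] at h2
    have h6 : ‖(show RealFAlg.carrier from (1 : ℝ))‖ = 1 := by
      show ‖(1 : ℝ)‖ = 1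
      norm_num
    rw [h6] at h2
    norm_num at h2
  · push_neg at hE
    obtain ⟨x₀, hx₀⟩ := hE
    haveI : Nontrivial E := ⟨x₀, 0, hx₀⟩
    haveI : Nontrivial A.carrier := by
      refine ⟨η x₀, 0, fun hc => hx₀ ?_⟩
      have := η.norm_map x₀
      rw [hc, norm_zero] at this
      exact norm_eq_zero.mp this.symm
    have hub := tauSet_le_norm E A η f
    have hbdd : BddAbove (tauSet E A η f) := ⟨‖f‖, hub⟩
    have hne : (tauSet E A η f).Nonempty := ⟨0, zero_mem_tauSet E A η f⟩
    have hupper : tau E A η f ≤ ‖f‖ := csSup_le hne hub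
    -- `genSub A (range η) = ⊤`
    have hηn : ‖η.toContinuousLinearMap‖ ≤ 1 := η.norm_toContinuousLinearMap_le
    have htop : ∀ a : A.carrier, a ∈ genSub A (Set.range ⇑η) := by
      let ηC : E →ₗᵢ[ℝ] (isFSub_genSub A (Set.range ⇑η)).toFAlg.carrier :=
        { toLinearMap :=
            { toFun := fun x => ⟨η x, subset_genSub _ _ ⟨x, rfl⟩⟩
              map_add' := by
                intro a b
                apply Subtype.ext
                show η (a + b) = η a + η b
                rw [map_add]
              map_smul' := by
                intro r a
                apply Subtype.ext
                show η (r • a) = r • η a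
                rw [map_smul] }
          norm_map' := fun x => η.norm_map x }
      obtain ⟨hat, ⟨hhom, hext, hnormhat⟩, -⟩ :=
        hfree (isFSub_genSub A (Set.range ⇑η)).toFAlg ηC.toContinuousLinearMap
          ηC.norm_toContinuousLinearMap_le
      obtain ⟨U, hU, hUuniq⟩ := hfree A η.toContinuousLinearMap hηn
      have hid : ContinuousLinearMap.id ℝ A.carrier = U := by
        refine hUuniq _ ⟨⟨fun a b => rfl, fun a b => rfl⟩, fun x => rfl, ?_⟩
        rw [ContinuousLinearMap.norm_id, η.norm_toContinuousLinearMap]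
      have hSm : (isFSub_genSub A (Set.range ⇑η)).incl.comp hat = U := by
        refine hUuniq _ ⟨isLatAlgHom_comp hhom (isFSub_genSub A (Set.range ⇑η)).incl_latAlgHom,
          fun x => ?_, ?_⟩
        · show (isFSub_genSub A (Set.range ⇑η)).incl (hat (η x)) = η x
          rw [hext x]
          rfl
        · rw [η.norm_toContinuousLinearMap]
          refine le_antisymm ?_ ?_
          · refine ContinuousLinearMap.opNorm_le_bound _ zero_le_one fun a => ?_
            rw [one_mul]
            calc ‖(isFSub_genSub A (Set.range ⇑η)).incl (hat a)‖ = ‖hat a‖ :=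
                (isFSub_genSub A (Set.range ⇑η)).norm_incl _
              _ ≤ ‖hat‖ * ‖a‖ := hat.le_opNorm a
              _ ≤ 1 * ‖a‖ := mul_le_mul_of_nonneg_right
                  (by rw [hnormhat]; exact ηC.norm_toContinuousLinearMap_le) (norm_nonneg a)
              _ = ‖a‖ := one_mul _
          · have e5 : (isFSub_genSub A (Set.range ⇑η)).incl.comp hat (η x₀) = η x₀ := by
              show (isFSub_genSub A (Set.range ⇑η)).incl (hat (η x₀)) = η x₀
              rw [hext x₀]
              rfl
            have h7 := ((isFSub_genSub A (Set.range ⇑η)).incl.comp hat).le_opNorm (η x₀)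
            rw [e5, η.norm_map x₀] at h7
            have hx₀n : 0 < ‖x₀‖ := norm_pos_iff.mpr hx₀
            nlinarith [h7]
      intro a
      have e6 : (isFSub_genSub A (Set.range ⇑η)).incl.comp hat a = a := by
        rw [hSm, ← hid]
        rfl
      rw [← e6]
      exact (hat a).2
    -- union of subalgebras over the Esub l
    have hmono : ∀ {l m : Λ}, Esub l ≤ Esub m →
        genSub A (⇑η '' (Esub l : Set E)) ≤ genSub A (⇑η '' (Esub m : Set E)) := by
      intro l m hlm
      exact genSub_le A (isFSub_genSub _ _)
        (subset_trans (Set.image_mono hlm) (subset_genSub _ _))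
    have hU0 : (0 : A.carrier) ∈ ⋃ l, (genSub A (⇑η '' (Esub l : Set E)) : Set A.carrier) :=
      Set.mem_iUnion.mpr ⟨Classical.arbitrary Λ, zero_mem _⟩
    let Usub : Submodule ℝ A.carrier :=
      { carrier := ⋃ l, (genSub A (⇑η '' (Esub l : Set E)) : Set A.carrier)
        zero_mem' := hU0
        add_mem' := by
          intro a b ha hb
          obtain ⟨l, hl⟩ := Set.mem_iUnion.mp ha
          obtain ⟨m, hm⟩ := Set.mem_iUnion.mp hb
          obtain ⟨k, hk1, hk2⟩ := hdir l m
          exact Set.mem_iUnion.mpr ⟨k, add_mem (hmono hk1 hl) (hmono hk2 hm)⟩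
        smul_mem' := by
          intro r a ha
          obtain ⟨l, hl⟩ := Set.mem_iUnion.mp ha
          exact Set.mem_iUnion.mpr ⟨l, Submodule.smul_mem _ r hl⟩ }
    have humul : ∀ a ∈ (Usub : Set A.carrier), ∀ b ∈ (Usub : Set A.carrier),
        A.mul a b ∈ (Usub : Set A.carrier) := by
      intro a ha b hb
      obtain ⟨l, hl⟩ := Set.mem_iUnion.mp ha
      obtain ⟨m, hm⟩ := Set.mem_iUnion.mp hb
      obtain ⟨k, hk1, hk2⟩ := hdir l m
      exact Set.mem_iUnion.mpr ⟨k, (isFSub_genSub _ _).mul_mem (hmono hk1 hl) (hmono hk2 hm)⟩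
    have husup : ∀ a ∈ (Usub : Set A.carrier), ∀ b ∈ (Usub : Set A.carrier),
        a ⊔ b ∈ (Usub : Set A.carrier) := by
      intro a ha b hb
      obtain ⟨l, hl⟩ := Set.mem_iUnion.mp ha
      obtain ⟨m, hm⟩ := Set.mem_iUnion.mp hb
      obtain ⟨k, hk1, hk2⟩ := hdir l m
      exact Set.mem_iUnion.mpr ⟨k, (isFSub_genSub _ _).sup_mem (hmono hk1 hl) (hmono hk2 hm)⟩
    have hWc : (Usub.topologicalClosure : Set A.carrier) = closure (Usub : Set A.carrier) :=
      Usub.topologicalClosure_coe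
    have hWsub : IsFSub A Usub.topologicalClosure := by
      constructor
      · exact Usub.isClosed_topologicalClosure
      · intro a b ha hb
        have ha' : a ∈ closure (Usub : Set A.carrier) := by rw [← hWc]; exact ha
        have hb' : b ∈ closure (Usub : Set A.carrier) := by rw [← hWc]; exact hb
        have := mem_closure_op A.mul_continuous humul ha' hb'
        rw [← SetLike.mem_coe, hWc]
        exact this
      · intro a b ha hb
        have ha' : a ∈ closure (Usub : Set A.carrier) := by rw [← hWc]; exact ha
        have hb' : b ∈ closure (Usub : Set A.carrier) := by rw [← hWc]; exact hb
        have := mem_closure_op continuous_sup husup ha' hb'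
        rw [← SetLike.mem_coe, hWc]
        exact this
    have hrange : Set.range ⇑η ⊆ (Usub.topologicalClosure : Set A.carrier) := by
      rintro y ⟨x, rfl⟩
      have hx : x ∈ closure (⋃ l, (Esub l : Set E)) := hdense x
      have h8 : η x ∈ closure (⇑η '' ⋃ l, (Esub l : Set E)) :=
        image_closure_subset_closure_image η.continuous ⟨x, hx, rfl⟩
      have h9 : ⇑η '' (⋃ l, (Esub l : Set E)) ⊆ (Usub : Set A.carrier) := by
        rw [Set.image_iUnion]
        refine Set.iUnion_subset fun l => ?_
        exact subset_trans (subset_genSub A _) (Set.subset_iUnion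
          (fun l => (genSub A (⇑η '' (Esub l : Set E)) : Set A.carrier)) l)
      rw [hWc]
      exact closure_mono h9 h8
    have hfW : f ∈ closure (Usub : Set A.carrier) := by
      have h6 : genSub A (Set.range ⇑η) ≤ Usub.topologicalClosure :=
        genSub_le A hWsub hrange
      have := h6 (htop f)
      rw [← SetLike.mem_coe, hWc] at this
      exact this
    -- epsilon argument
    have hlower : ∀ ε : ℝ, 0 < ε → ‖f‖ ≤ tau E A η f + ε := by
      intro ε hε
      have htnn : 0 ≤ tau E A η f := le_csSup hbdd (zero_mem_tauSet E A η f)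
      by_cases hcase : ‖f‖ ≤ ε
      · linarith
      push_neg at hcase
      obtain ⟨g, hgu, hgdist⟩ := Metric.mem_closure_iff.mp hfW (ε/3) (by linarith)
      obtain ⟨l, hgl⟩ := Set.mem_iUnion.mp hgu
      obtain ⟨P, hP1, hPy⟩ := hproj l
      have hfl := free_sub hfree (Esub l) P hP1 hPy
      have htau := hsub l _ _ hfl ⟨g, hgl⟩
      rw [tau_eq] at htau
      have hgn : ‖(⟨g, hgl⟩ : (isFSub_genSub A (⇑η '' (Esub l : Set E))).toFAlg.carrier)‖
          = ‖g‖ := rfl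
      rw [hgn] at htau
      have hdistn : ‖f - g‖ < ε / 3 := by rw [← dist_eq_norm]; exact hgdist
      have hg1 : ‖f‖ - ε/3 ≤ ‖g‖ := by
        have := norm_sub_norm_le f g
        linarith
      have hlt : ‖g‖ - ε/3 < sSup (tauSet ↥(Esub l)
          (isFSub_genSub A (⇑η '' (Esub l : Set E))).toFAlg (subeta η (Esub l)) ⟨g, hgl⟩) := by
        rw [htau]
        linarith
      obtain ⟨r', hr'mem, hr'⟩ := exists_lt_of_lt_csSup ⟨0, zero_mem_tauSet _ _ _ _⟩ hlt
      obtain ⟨B, hBfd, hBsp, S, Shat, hS1, hShom, hSext, hSnorm, rfl⟩ := hr'mem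
      have hT1 : ‖S.comp P‖ ≤ 1 :=
        le_trans (S.opNorm_comp_le P) (mul_le_one₀ hS1 (norm_nonneg P) hP1)
      obtain ⟨hat, ⟨hhom2, hext2, hnorm2⟩, -⟩ := hfree B (S.comp P) hT1
      obtain ⟨V, hV, hVuniq⟩ := hfl B S hS1
      have e1 : Shat = V := hVuniq Shat ⟨hShom, hSext, hSnorm⟩
      have hext3 : ∀ y : ↥(Esub l),
          (hat.comp (isFSub_genSub A (⇑η '' (Esub l : Set E))).incl)
            (subeta η (Esub l) y) = S y := by
        intro y
        show hat (η y) = S y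
        rw [hext2 y]
        show S (P (y : E)) = S y
        rw [hPy]
      have e2 : hat.comp (isFSub_genSub A (⇑η '' (Esub l : Set E))).incl = V := by
        refine hVuniq _ ⟨isLatAlgHom_comp
          (isFSub_genSub A (⇑η '' (Esub l : Set E))).incl_latAlgHom hhom2, hext3, ?_⟩
        refine le_antisymm ?_ ?_
        · refine ContinuousLinearMap.opNorm_le_bound _ (norm_nonneg S) fun a => ?_
          calc ‖hat ((isFSub_genSub A (⇑η '' (Esub l : Set E))).incl a)‖
              ≤ ‖hat‖ * ‖(isFSub_genSub A (⇑η '' (Esub l : Set E))).incl a‖ := hat.le_opNorm _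
            _ = ‖S.comp P‖ * ‖a‖ := by
                rw [hnorm2, (isFSub_genSub A (⇑η '' (Esub l : Set E))).norm_incl]
            _ ≤ (‖S‖ * ‖P‖) * ‖a‖ :=
                mul_le_mul_of_nonneg_right (S.opNorm_comp_le P) (norm_nonneg a)
            _ ≤ ‖S‖ * ‖a‖ := mul_le_mul_of_nonneg_right
                (mul_le_of_le_one_right (norm_nonneg S) hP1) (norm_nonneg a)
        · refine ContinuousLinearMap.opNorm_le_bound _ (norm_nonneg _) fun y => ?_
          rw [← hext3 y]
          calc ‖(hat.comp (isFSub_genSub A (⇑η '' (Esub l : Set E))).incl)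
                (subeta η (Esub l) y)‖
              ≤ ‖hat.comp (isFSub_genSub A (⇑η '' (Esub l : Set E))).incl‖
                  * ‖subeta η (Esub l) y‖ := ContinuousLinearMap.le_opNorm _ _
            _ = ‖hat.comp (isFSub_genSub A (⇑η '' (Esub l : Set E))).incl‖ * ‖y‖ := by
                rw [(subeta η (Esub l)).norm_map]
      have e4 : hat.comp (isFSub_genSub A (⇑η '' (Esub l : Set E))).incl = Shat :=
        e2.trans e1.symm
      have hhatg : hat g = Shat ⟨g, hgl⟩ := by
        rw [← e4]
        rfl
      have hrmem : ‖hat f‖ ∈ tauSet E A η f :=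
        ⟨B, hBfd, hBsp, S.comp P, hat, hT1, hhom2, hext2, hnorm2, rfl⟩
      have h8 : ‖hat (g - f)‖ ≤ ε/3 := by
        calc ‖hat (g - f)‖ ≤ ‖hat‖ * ‖g - f‖ := hat.le_opNorm _
          _ ≤ 1 * ‖g - f‖ := mul_le_mul_of_nonneg_right
              (by rw [hnorm2]; exact hT1) (norm_nonneg _)
          _ = ‖g - f‖ := one_mul _
          _ ≤ ε/3 := by rw [norm_sub_rev]; linarith
      have h9 : ‖hat g‖ - ‖hat f‖ ≤ ‖hat (g - f)‖ := by
        have := norm_sub_norm_le (hat g) (hat f)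
        rw [← map_sub] at this
        exact this
      have h10 : tau E A η f ≥ ‖hat f‖ := le_csSup hbdd hrmem
      rw [hhatg] at h9
      linarith
    have hlow : ‖f‖ ≤ tau E A η f := by
      by_contra hcon
      push_neg at hcon
      have := hlower ((‖f‖ - tau E A η f)/2) (by linarith)
      linarith
    linarith
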